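/- arXiv:math-ph/0406008 — 2 statements merged into one kernel-verified Lean document; each statement's English description precedes it below -/
import Mathlib

section
/- Let m > 0, V : ℝⁿ → ℝ be C¹, S₁ continuous, and let S be a C¹ solution of ∂S/∂t + (1/(2m))‖∇S‖² + V = 0 on [t₀,t₁]×ℝⁿ with S(t₁,·) = S₁. If x* is a C¹ path with x*(t₀) = x₀ and ẋ*(t) = (1/m)∇S(t,x*(t)) for all t, then for every C¹ path x with x(t₀) = x₀ one has ∫_{t₀}^{t₁} L(x*(t),ẋ*(t)) dt − S₁(x*(t₁)) ≤ ∫_{t₀}^{t₁} L(x(t),ẋ(t)) dt − S₁(x(t₁)), where L(x,v) = (m/2)‖v‖² − V(x). -/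
open Matrix

/-- Spatial gradient of a function on `ℝⁿ`. -/
noncomputable def grad {n : ℕ} (f : (Fin n → ℝ) → ℝ) (x : Fin n → ℝ) : Fin n → ℝ :=
  fun i => fderiv ℝ f x (Pi.single i 1)

lemma grad_dot' {n : ℕ} (t : ℝ) (y : Fin n → ℝ)
    (S : ℝ → (Fin n → ℝ) → ℝ)
    (hS : ContDiff ℝ 1 (fun p : ℝ × (Fin n → ℝ) => S p.1 p.2)) (w : Fin n → ℝ) :
    grad (S t) y ⬝ᵥ w
      = fderiv ℝ (fun p : ℝ × (Fin n → ℝ) => S p.1 p.2) (t, y) (0, w) := by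
  set D := fderiv ℝ (fun p : ℝ × (Fin n → ℝ) => S p.1 p.2) (t, y) with hD
  have hF : HasFDerivAt (fun p : ℝ × (Fin n → ℝ) => S p.1 p.2) D (t, y) :=
    (hS.differentiable one_ne_zero _).hasFDerivAt
  have hinr : HasFDerivAt (fun z : Fin n → ℝ => ((t : ℝ), z))
      (ContinuousLinearMap.inr ℝ ℝ (Fin n → ℝ)) y :=
    (hasFDerivAt_const t y).prodMk (hasFDerivAt_id y)
  have hcomp : HasFDerivAt (S t) (D.comp (ContinuousLinearMap.inr ℝ ℝ (Fin n → ℝ))) y :=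
    hF.comp y hinr
  have hg : ∀ i, grad (S t) y i = D (0, Pi.single i 1) := by
    intro i; simp [grad, hcomp.fderiv]
  have hsingle : ∀ i, D (0, Pi.single i (w i)) = w i • D (0, Pi.single i 1) := by
    intro i
    have h1 : ((0:ℝ), Pi.single i (w i)) = w i • (((0:ℝ), Pi.single i (1:ℝ)) : ℝ × (Fin n → ℝ)) := by
      refine Prod.ext (by simp) ?_
      funext j
      by_cases h : j = i <;> simp [Pi.single_apply, h]
    rw [h1, D.map_smul]
  have hw : (∑ i, ((0:ℝ), Pi.single i (w i)) : ℝ × (Fin n → ℝ)) = (0, w) := by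
    refine Prod.ext ?_ ?_
    · rw [Prod.fst_sum]; simp
    · rw [Prod.snd_sum]; simpa using Finset.univ_sum_single w
  calc grad (S t) y ⬝ᵥ w = ∑ i, w i • D (0, Pi.single i 1) := by
        simp [dotProduct, hg, mul_comm, smul_eq_mul]
    _ = ∑ i, D (0, Pi.single i (w i)) := by simp [hsingle]
    _ = D (0, w) := by rw [← map_sum, hw]

lemma path_hasDerivAt {n : ℕ} (t : ℝ) (x : ℝ → Fin n → ℝ) (hx : ContDiff ℝ 1 x)
    (S : ℝ → (Fin n → ℝ) → ℝ)
    (hS : ContDiff ℝ 1 (fun p : ℝ × (Fin n → ℝ) => S p.1 p.2)) :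
    HasDerivAt (fun τ => S τ (x τ))
      (fderiv ℝ (fun p : ℝ × (Fin n → ℝ) => S p.1 p.2) (t, x t) (1, deriv x t)) t := by
  have hxd : HasDerivAt x (deriv x t) t := (hx.differentiable one_ne_zero t).hasDerivAt
  have hp : HasDerivAt (fun τ => (τ, x τ)) ((1 : ℝ), deriv x t) t :=
    (hasDerivAt_id t).prodMk hxd
  have hF : HasFDerivAt (fun p : ℝ × (Fin n → ℝ) => S p.1 p.2)
      (fderiv ℝ (fun p : ℝ × (Fin n → ℝ) => S p.1 p.2) (t, x t)) (t, x t) :=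
    (hS.differentiable one_ne_zero _).hasFDerivAt
  exact hF.comp_hasDerivAt t hp

lemma time_deriv_eq {n : ℕ} (t : ℝ) (y : Fin n → ℝ)
    (S : ℝ → (Fin n → ℝ) → ℝ)
    (hS : ContDiff ℝ 1 (fun p : ℝ × (Fin n → ℝ) => S p.1 p.2)) :
    deriv (fun τ => S τ y) t
      = fderiv ℝ (fun p : ℝ × (Fin n → ℝ) => S p.1 p.2) (t, y) (1, 0) := by
  have hp : HasDerivAt (fun τ : ℝ => (τ, y)) ((1 : ℝ), (0 : Fin n → ℝ)) t :=
    (hasDerivAt_id t).prodMk (hasDerivAt_const t y)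
  have hF : HasFDerivAt (fun p : ℝ × (Fin n → ℝ) => S p.1 p.2)
      (fderiv ℝ (fun p : ℝ × (Fin n → ℝ) => S p.1 p.2) (t, y)) (t, y) :=
    (hS.differentiable one_ne_zero _).hasFDerivAt
  exact (hF.comp_hasDerivAt t hp).deriv

lemma deriv_along {n : ℕ} (t₀ t₁ : ℝ) (m : ℝ) (hm : 0 < m)
    (V : (Fin n → ℝ) → ℝ)
    (S : ℝ → (Fin n → ℝ) → ℝ)
    (hS : ContDiff ℝ 1 (fun p : ℝ × (Fin n → ℝ) => S p.1 p.2))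
    (hHJ : ∀ t ∈ Set.Icc t₀ t₁, ∀ y : Fin n → ℝ,
      deriv (fun τ => S τ y) t
        + (1 / (2 * m)) * (grad (S t) y ⬝ᵥ grad (S t) y) + V y = 0)
    (x : ℝ → Fin n → ℝ) (hx : ContDiff ℝ 1 x) :
    ∀ t ∈ Set.Icc t₀ t₁,
      deriv (fun τ => S τ (x τ)) t
        = ((m / 2) * (deriv x t ⬝ᵥ deriv x t) - V (x t))
          - (m / 2) * ((deriv x t - m⁻¹ • grad (S t) (x t)) ⬝ᵥ
              (deriv x t - m⁻¹ • grad (S t) (x t))) := by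
  intro t htmem
  set D := fderiv ℝ (fun p : ℝ × (Fin n → ℝ) => S p.1 p.2) (t, x t) with hD
  set v := deriv x t with hv
  set G := grad (S t) (x t) with hG
  have h1 : deriv (fun τ => S τ (x τ)) t = D (1, v) :=
    (path_hasDerivAt t x hx S hS).deriv
  have hsplit : ((1:ℝ), v) = ((1:ℝ), (0 : Fin n → ℝ)) + ((0:ℝ), v) := by simp
  have h2 : D (1, v) = D (1, 0) + D (0, v) := by rw [hsplit, map_add]
  have h3 : D ((1:ℝ), (0 : Fin n → ℝ)) = deriv (fun τ => S τ (x t)) t :=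
    (time_deriv_eq t (x t) S hS).symm
  have h4 : D ((0:ℝ), v) = G ⬝ᵥ v := (grad_dot' t (x t) S hS v).symm
  have hHJt := hHJ t htmem (x t)
  have h5 : deriv (fun τ => S τ (x t)) t
      = -((1 / (2 * m)) * (G ⬝ᵥ G)) - V (x t) := by
    rw [← hG] at hHJt; linarith
  have hvG : v ⬝ᵥ G = G ⬝ᵥ v := dotProduct_comm v G
  have hexp : (v - m⁻¹ • G) ⬝ᵥ (v - m⁻¹ • G)
      = v ⬝ᵥ v - m⁻¹ * (G ⬝ᵥ v) - (m⁻¹ * (G ⬝ᵥ v) - m⁻¹ * (m⁻¹ * (G ⬝ᵥ G))) := by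
    simp [sub_dotProduct, dotProduct_sub, smul_dotProduct,
      dotProduct_smul, smul_eq_mul, hvG]
    ring
  rw [h1, h2, h3, h4, h5, hexp]
  have hm0 : m ≠ 0 := ne_of_gt hm
  field_simp
  ring

theorem stmt_12 {n : ℕ} (t₀ t₁ : ℝ) (ht : t₀ ≤ t₁) (m : ℝ) (hm : 0 < m)
    (V : (Fin n → ℝ) → ℝ) (hV : ContDiff ℝ 1 V)
    (S₁ : (Fin n → ℝ) → ℝ) (hS₁ : Continuous S₁)
    (S : ℝ → (Fin n → ℝ) → ℝ)
    (hS : ContDiff ℝ 1 (fun p : ℝ × (Fin n → ℝ) => S p.1 p.2))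
    (hHJ : ∀ t ∈ Set.Icc t₀ t₁, ∀ y : Fin n → ℝ,
      deriv (fun τ => S τ y) t
        + (1 / (2 * m)) * (grad (S t) y ⬝ᵥ grad (S t) y) + V y = 0)
    (hterm : ∀ y : Fin n → ℝ, S t₁ y = S₁ y)
    (x₀ : Fin n → ℝ)
    (xs : ℝ → Fin n → ℝ) (hxs : ContDiff ℝ 1 xs) (hxs0 : xs t₀ = x₀)
    (hflow : ∀ t ∈ Set.Icc t₀ t₁, deriv xs t = m⁻¹ • grad (S t) (xs t)) :
    ∀ x : ℝ → Fin n → ℝ, ContDiff ℝ 1 x → x t₀ = x₀ →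
      (∫ t in t₀..t₁, ((m / 2) * (deriv xs t ⬝ᵥ deriv xs t) - V (xs t)))
          - S₁ (xs t₁)
        ≤ (∫ t in t₀..t₁, ((m / 2) * (deriv x t ⬝ᵥ deriv x t) - V (x t)))
          - S₁ (x t₁) := by
  intro x hx hx0
  -- common facts for a general path
  have key : ∀ z : ℝ → Fin n → ℝ, ContDiff ℝ 1 z → z t₀ = x₀ →
      (∫ t in t₀..t₁, deriv (fun τ => S τ (z τ)) t) = S₁ (z t₁) - S t₀ x₀ ∧
      IntervalIntegrable (fun t => deriv (fun τ => S τ (z τ)) t) MeasureTheory.volume t₀ t₁ ∧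
      IntervalIntegrable (fun t => (m / 2) * (deriv z t ⬝ᵥ deriv z t) - V (z t))
        MeasureTheory.volume t₀ t₁ := by
    intro z hz hz0
    have hg : ContDiff ℝ 1 (fun τ => S τ (z τ)) :=
      hS.comp (contDiff_id.prodMk hz)
    have hcd : Continuous (deriv (fun τ => S τ (z τ))) := hg.continuous_deriv le_rfl
    have hdz : Continuous (deriv z) := hz.continuous_deriv le_rfl
    have hdd : Continuous (fun t => deriv z t ⬝ᵥ deriv z t) := by
      simp only [dotProduct]
      exact continuous_finset_sum _ fun i _ =>
        ((continuous_apply i).comp hdz).mul ((continuous_apply i).comp hdz)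
    have hL : Continuous (fun t => (m / 2) * (deriv z t ⬝ᵥ deriv z t) - V (z t)) :=
      (continuous_const.mul hdd).sub ((hV.continuous).comp hz.continuous)
    refine ⟨?_, hcd.intervalIntegrable _ _, hL.intervalIntegrable _ _⟩
    have := intervalIntegral.integral_deriv_eq_sub
      (f := fun τ => S τ (z τ)) (a := t₀) (b := t₁)
      (fun u _ => hg.differentiable one_ne_zero u)
      (hcd.intervalIntegrable _ _)
    rw [this]
    rw [hz0, hterm]
  obtain ⟨hkey1, hint1, hintL1⟩ := key xs hxs hxs0
  obtain ⟨hkey2, hint2, hintL2⟩ := key x hx hx0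
  -- for xs : equality of integrands on [t₀,t₁]
  have heqs : (∫ t in t₀..t₁, ((m / 2) * (deriv xs t ⬝ᵥ deriv xs t) - V (xs t)))
      = S₁ (xs t₁) - S t₀ x₀ := by
    rw [← hkey1]
    apply intervalIntegral.integral_congr
    intro t htmem
    rw [Set.uIcc_of_le ht] at htmem
    have := deriv_along t₀ t₁ m hm V S hS hHJ xs hxs t htmem
    have hw : deriv xs t - m⁻¹ • grad (S t) (xs t) = 0 := by
      rw [hflow t htmem]; simp
    rw [hw] at this
    simp only [zero_dotProduct] at this
    simp [this]
  -- for x : inequality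
  have hineq : S₁ (x t₁) - S t₀ x₀
      ≤ ∫ t in t₀..t₁, ((m / 2) * (deriv x t ⬝ᵥ deriv x t) - V (x t)) := by
    rw [← hkey2]
    apply intervalIntegral.integral_mono_on ht hint2 hintL2
    intro t htmem
    have := deriv_along t₀ t₁ m hm V S hS hHJ x hx t htmem
    have hnn : 0 ≤ (deriv x t - m⁻¹ • grad (S t) (x t)) ⬝ᵥ
        (deriv x t - m⁻¹ • grad (S t) (x t)) := by
      apply Finset.sum_nonneg
      intro i _
      exact mul_self_nonneg _
    nlinarith
  rw [heqs]
  linarith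
end

section
/- Let m > 0, V : ℝⁿ → ℝ be C¹, S₁ continuous, Ω : ℝⁿ → ℝ^{k×n} continuous with full row rank everywhere, σ(x) = I − Ωᵀ(x)(Ω(x)Ωᵀ(x))⁻¹Ω(x), and let S be a C¹ solution of ∂S/∂t + (1/(2m))∇S·σ∇S + V = 0 on [t₀,t₁]×ℝⁿ with S(t₁,·) = S₁. If x* is C¹ with x*(t₀) = x₀ and ẋ*(t) = (1/m)σ(x*(t))∇S(t,x*(t)), then x* minimizes the action I(x) = ∫_{t₀}^{t₁}[(m/2)‖ẋ‖² − V(x)] dt − S₁(x(t₁)) over all C¹ paths x with x(t₀) = x₀ and Ω(x(t))ẋ(t) = 0 for all t. -/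
open Matrix

namespace Stmt17Aux

variable {n k : ℕ}

lemma gram_isUnit (A : Matrix (Fin k) (Fin n) ℝ)
    (hA : LinearIndependent ℝ (fun i => A i)) : IsUnit (A * Aᵀ) := by
  rw [← Matrix.mulVec_injective_iff_isUnit]
  have key : ∀ c, (A * Aᵀ).mulVec c = 0 → c = 0 := by
    intro c hc
    have h0 : c ⬝ᵥ (A * Aᵀ).mulVec c = 0 := by rw [hc]; simp
    rw [← Matrix.mulVec_mulVec, Matrix.dotProduct_mulVec, ← Matrix.mulVec_transpose] at h0
    have hw0 : Aᵀ.mulVec c = 0 := dotProduct_self_eq_zero.mp h0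
    have hinj : Function.Injective (Matrix.vecMul · A) := Matrix.vecMul_injective_iff.mpr hA
    have : Matrix.vecMul c A = Matrix.vecMul 0 A := by
      rw [Matrix.zero_vecMul, ← Matrix.mulVec_transpose]; exact hw0
    exact hinj this
  intro a b hab
  have h1 : (A * Aᵀ).mulVec (a - b) = 0 := by
    rw [Matrix.mulVec_sub, hab, sub_self]
  exact sub_eq_zero.mp (key _ h1)

lemma sigma_symm (A : Matrix (Fin k) (Fin n) ℝ) :
    (1 - Aᵀ * (A * Aᵀ)⁻¹ * A)ᵀ = 1 - Aᵀ * (A * Aᵀ)⁻¹ * A := by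
  have h : (A * Aᵀ)ᵀ = A * Aᵀ := by rw [Matrix.transpose_mul, Matrix.transpose_transpose]
  simp [Matrix.transpose_sub, Matrix.transpose_mul, Matrix.transpose_transpose,
    Matrix.transpose_nonsing_inv, h, Matrix.mul_assoc]

lemma sigma_idem (A : Matrix (Fin k) (Fin n) ℝ)
    (hG : IsUnit (A * Aᵀ)) :
    (1 - Aᵀ * (A * Aᵀ)⁻¹ * A) * (1 - Aᵀ * (A * Aᵀ)⁻¹ * A) = 1 - Aᵀ * (A * Aᵀ)⁻¹ * A := by
  have hd : IsUnit (A * Aᵀ).det := (Matrix.isUnit_iff_isUnit_det _).mp hG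
  have hP : (Aᵀ * (A * Aᵀ)⁻¹ * A) * (Aᵀ * (A * Aᵀ)⁻¹ * A) = Aᵀ * (A * Aᵀ)⁻¹ * A := by
    calc (Aᵀ * (A * Aᵀ)⁻¹ * A) * (Aᵀ * (A * Aᵀ)⁻¹ * A)
        = Aᵀ * ((A * Aᵀ)⁻¹ * ((A * Aᵀ) * ((A * Aᵀ)⁻¹ * A))) := by
          simp only [Matrix.mul_assoc]
      _ = Aᵀ * (A * Aᵀ)⁻¹ * A := by
          rw [Matrix.nonsing_inv_mul_cancel_left _ _ hd, Matrix.mul_assoc]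
  rw [Matrix.sub_mul, Matrix.mul_sub, Matrix.mul_sub, Matrix.mul_one, hP]
  simp only [Matrix.one_mul, Matrix.mul_one]
  abel

lemma sigma_kernel (A : Matrix (Fin k) (Fin n) ℝ) (v : Fin n → ℝ)
    (hv : A.mulVec v = 0) :
    (1 - Aᵀ * (A * Aᵀ)⁻¹ * A).mulVec v = v := by
  rw [Matrix.sub_mulVec, Matrix.one_mulVec, Matrix.mul_assoc, ← Matrix.mulVec_mulVec,
    ← Matrix.mulVec_mulVec, hv, Matrix.mulVec_zero, Matrix.mulVec_zero, sub_zero]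

lemma dot_proj (M : Matrix (Fin n) (Fin n) ℝ) (hsym : Mᵀ = M) (hidem : M * M = M)
    (g : Fin n → ℝ) :
    g ⬝ᵥ M.mulVec g = M.mulVec g ⬝ᵥ M.mulVec g := by
  have hvm : Matrix.vecMul (M.mulVec g) M = M.mulVec (M.mulVec g) := by
    rw [← hsym, Matrix.vecMul_transpose, hsym]
  rw [Matrix.dotProduct_mulVec (M.mulVec g), hvm, Matrix.mulVec_mulVec, hidem,
    Matrix.dotProduct_mulVec g]
  rw [show Matrix.vecMul g M = M.mulVec g by rw [← hsym, Matrix.vecMul_transpose, hsym]]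

lemma dot_constr (M : Matrix (Fin n) (Fin n) ℝ) (hsym : Mᵀ = M)
    (g v : Fin n → ℝ) (hv : M.mulVec v = v) :
    g ⬝ᵥ v = M.mulVec g ⬝ᵥ v := by
  conv_lhs => rw [← hv]
  rw [Matrix.dotProduct_mulVec g, show Matrix.vecMul g M = M.mulVec g by
    rw [← hsym, Matrix.vecMul_transpose, hsym]]

lemma fderiv_eq_dot (f : (Fin n → ℝ) → ℝ) (y : Fin n → ℝ) (v : Fin n → ℝ) :
    fderiv ℝ f y v = grad f y ⬝ᵥ v := by
  have hv : v = ∑ i, (v i) • (Pi.single i 1 : Fin n → ℝ) := by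
    ext j
    rw [Finset.sum_apply]
    simp [Pi.single_apply]
  conv_lhs => rw [hv]
  rw [map_sum]
  simp only [_root_.map_smul, smul_eq_mul]
  rw [dotProduct]
  exact Finset.sum_congr rfl fun i _ => by rw [grad, mul_comm]

lemma hasDerivAt_S_comp (S : ℝ → (Fin n → ℝ) → ℝ)
    (hS : ContDiff ℝ 1 (fun p : ℝ × (Fin n → ℝ) => S p.1 p.2))
    (z : ℝ → Fin n → ℝ) (hz : ContDiff ℝ 1 z) (t : ℝ) :
    HasDerivAt (fun τ => S τ (z τ))
      (deriv (fun τ => S τ (z t)) t + grad (S t) (z t) ⬝ᵥ deriv z t) t := by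
  set F := fun p : ℝ × (Fin n → ℝ) => S p.1 p.2 with hF
  have hFd : HasFDerivAt F (fderiv ℝ F (t, z t)) (t, z t) :=
    (hS.differentiable one_ne_zero _).hasFDerivAt
  have hzt : HasDerivAt z (deriv z t) t := (hz.differentiable one_ne_zero t).hasDerivAt
  have hγ : HasDerivAt (fun τ => (τ, z τ)) ((1:ℝ), deriv z t) t :=
    (hasDerivAt_id t).prodMk hzt
  have hcomp : HasDerivAt (fun τ => S τ (z τ))
      (fderiv ℝ F (t, z t) ((1:ℝ), deriv z t)) t := by
    have := hFd.comp_hasDerivAt t hγ; exact this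
  have hsplit : ((1:ℝ), deriv z t) = ((1:ℝ), (0 : Fin n → ℝ)) + ((0:ℝ), deriv z t) := by
    simp
  have claim1 : fderiv ℝ F (t, z t) ((1:ℝ), (0 : Fin n → ℝ))
      = deriv (fun τ => S τ (z t)) t := by
    have h1 : HasDerivAt (fun τ : ℝ => (τ, z t)) ((1:ℝ), (0 : Fin n → ℝ)) t :=
      (hasDerivAt_id t).prodMk (hasDerivAt_const t (z t))
    exact (hFd.comp_hasDerivAt t h1).deriv.symm
  have claim2 : fderiv ℝ F (t, z t) ((0:ℝ), deriv z t) = grad (S t) (z t) ⬝ᵥ deriv z t := by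
    have h2 : HasFDerivAt (fun y : Fin n → ℝ => ((t:ℝ), y))
        (ContinuousLinearMap.inr ℝ ℝ (Fin n → ℝ)) (z t) :=
      hasFDerivAt_prodMk_right t (z t)
    have h3 : HasFDerivAt (S t)
        ((fderiv ℝ F (t, z t)).comp (ContinuousLinearMap.inr ℝ ℝ (Fin n → ℝ))) (z t) :=
      hFd.comp (z t) h2
    have h4 := h3.fderiv
    have h5 := fderiv_eq_dot (S t) (z t) (deriv z t)
    rw [h4] at h5
    simpa using h5
  rw [hsplit, map_add, claim1, claim2] at hcomp
  exact hcomp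

end Stmt17Aux

open Stmt17Aux in
theorem stmt_17 {n k : ℕ} (t₀ t₁ : ℝ) (ht : t₀ ≤ t₁) (m : ℝ) (hm : 0 < m)
    (V : (Fin n → ℝ) → ℝ) (hV : ContDiff ℝ 1 V)
    (S₁ : (Fin n → ℝ) → ℝ) (hS₁ : Continuous S₁)
    (Ω : (Fin n → ℝ) → Matrix (Fin k) (Fin n) ℝ)
    (hΩcont : ∀ i j, Continuous (fun y => Ω y i j))
    (hΩrank : ∀ y, LinearIndependent ℝ (fun i : Fin k => Ω y i))
    (σ : (Fin n → ℝ) → Matrix (Fin n) (Fin n) ℝ)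
    (hσ : ∀ y, σ y = 1 - (Ω y)ᵀ * (Ω y * (Ω y)ᵀ)⁻¹ * Ω y)
    (S : ℝ → (Fin n → ℝ) → ℝ)
    (hS : ContDiff ℝ 1 (fun p : ℝ × (Fin n → ℝ) => S p.1 p.2))
    (hGHJ : ∀ t ∈ Set.Icc t₀ t₁, ∀ y : Fin n → ℝ,
      deriv (fun τ => S τ y) t
        + (1 / (2 * m)) * (grad (S t) y ⬝ᵥ (σ y).mulVec (grad (S t) y)) + V y = 0)
    (hterm : ∀ y : Fin n → ℝ, S t₁ y = S₁ y)
    (x₀ : Fin n → ℝ)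
    (xs : ℝ → Fin n → ℝ) (hxs : ContDiff ℝ 1 xs) (hxs0 : xs t₀ = x₀)
    (hflow : ∀ t ∈ Set.Icc t₀ t₁,
      deriv xs t = m⁻¹ • (σ (xs t)).mulVec (grad (S t) (xs t))) :
    ∀ x : ℝ → Fin n → ℝ, ContDiff ℝ 1 x → x t₀ = x₀ →
      (∀ t ∈ Set.Icc t₀ t₁, (Ω (x t)).mulVec (deriv x t) = 0) →
      (∫ t in t₀..t₁, ((m / 2) * (deriv xs t ⬝ᵥ deriv xs t) - V (xs t)))
          - S₁ (xs t₁)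
        ≤ (∫ t in t₀..t₁, ((m / 2) * (deriv x t ⬝ᵥ deriv x t) - V (x t)))
          - S₁ (x t₁) := by
  intro x hx hx0 hcon
  -- σ facts at a point
  have hsymm : ∀ y, (σ y)ᵀ = σ y := by
    intro y; rw [hσ y]; exact sigma_symm (Ω y)
  have hidem : ∀ y, σ y * σ y = σ y := by
    intro y; rw [hσ y]; exact sigma_idem (Ω y) (gram_isUnit (Ω y) (hΩrank y))
  -- key identity for any admissible path
  have key : ∀ z : ℝ → Fin n → ℝ, ContDiff ℝ 1 z →
      (∀ t ∈ Set.Icc t₀ t₁, (σ (z t)).mulVec (deriv z t) = deriv z t) →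
      (∫ t in t₀..t₁, ((m / 2) * (deriv z t ⬝ᵥ deriv z t) - V (z t))) - S₁ (z t₁)
        = (∫ t in t₀..t₁, (m / 2) *
            ((deriv z t - m⁻¹ • (σ (z t)).mulVec (grad (S t) (z t))) ⬝ᵥ
             (deriv z t - m⁻¹ • (σ (z t)).mulVec (grad (S t) (z t)))))
          - S t₀ (z t₀) := by
    intro z hz hzc
    set φ := fun τ => S τ (z τ) with hφdef
    have hφ : ContDiff ℝ 1 φ := hS.comp (contDiff_id.prodMk hz)
    have hderiv_eq : ∀ t, deriv φ t
        = deriv (fun τ => S τ (z t)) t + grad (S t) (z t) ⬝ᵥ deriv z t :=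
      fun t => (hasDerivAt_S_comp S hS z hz t).deriv
    have hφcont : Continuous (deriv φ) := hφ.continuous_deriv le_rfl
    have hFTC : (∫ t in t₀..t₁, deriv φ t) = φ t₁ - φ t₀ :=
      intervalIntegral.integral_eq_sub_of_hasDerivAt
        (fun t _ => (hφ.differentiable one_ne_zero t).hasDerivAt)
        (hφcont.intervalIntegrable t₀ t₁)
    have hzc' : Continuous (deriv z) := hz.continuous_deriv le_rfl
    have hfcont : Continuous fun t => (m / 2) * (deriv z t ⬝ᵥ deriv z t) - V (z t) := by
      apply Continuous.sub
      · refine continuous_const.mul ?_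
        simp only [dotProduct]
        exact continuous_finset_sum _ fun i _ =>
          ((continuous_apply i).comp hzc').mul ((continuous_apply i).comp hzc')
      · exact hV.continuous.comp hz.continuous
    have hpt : ∀ t ∈ Set.Icc t₀ t₁,
        (m / 2) * (deriv z t ⬝ᵥ deriv z t) - V (z t) - deriv φ t
          = (m / 2) * ((deriv z t - m⁻¹ • (σ (z t)).mulVec (grad (S t) (z t))) ⬝ᵥ
              (deriv z t - m⁻¹ • (σ (z t)).mulVec (grad (S t) (z t)))) := by
      intro t htI
      set y := z t with hy
      set g := grad (S t) y with hg
      set v := deriv z t with hv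
      set p := (σ y).mulVec g with hp
      have hgp : g ⬝ᵥ p = p ⬝ᵥ p := dot_proj (σ y) (hsymm y) (hidem y) g
      have hgv : g ⬝ᵥ v = p ⬝ᵥ v := dot_constr (σ y) (hsymm y) g v (hzc t htI)
      have hghj := hGHJ t htI y
      have hdS : deriv (fun τ => S τ y) t = -((1 / (2 * m)) * (g ⬝ᵥ p)) - V y := by
        rw [← hg, ← hp] at hghj; linarith
      rw [hderiv_eq t]
      simp only [← hy, ← hg, ← hv, ← hp]
      rw [hdS]
      simp only [sub_dotProduct, dotProduct_sub, smul_dotProduct,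
        dotProduct_smul, smul_eq_mul]
      have hcomm : v ⬝ᵥ p = p ⬝ᵥ v := dotProduct_comm v p
      rw [hgv, hcomm, hgp]
      have hm' : m ≠ 0 := ne_of_gt hm
      field_simp
      ring
    have hcong : (∫ t in t₀..t₁,
          ((m / 2) * (deriv z t ⬝ᵥ deriv z t) - V (z t) - deriv φ t))
        = ∫ t in t₀..t₁, (m / 2) *
            ((deriv z t - m⁻¹ • (σ (z t)).mulVec (grad (S t) (z t))) ⬝ᵥ
             (deriv z t - m⁻¹ • (σ (z t)).mulVec (grad (S t) (z t)))) := by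
      apply intervalIntegral.integral_congr
      rw [Set.uIcc_of_le ht]
      intro t htI
      exact hpt t htI
    have hsub : (∫ t in t₀..t₁,
          ((m / 2) * (deriv z t ⬝ᵥ deriv z t) - V (z t) - deriv φ t))
        = (∫ t in t₀..t₁, ((m / 2) * (deriv z t ⬝ᵥ deriv z t) - V (z t)))
          - ∫ t in t₀..t₁, deriv φ t :=
      intervalIntegral.integral_sub (hfcont.intervalIntegrable t₀ t₁)
        (hφcont.intervalIntegrable t₀ t₁)
    have hφt₁ : φ t₁ = S₁ (z t₁) := hterm (z t₁)
    have : φ t₀ = S t₀ (z t₀) := rfl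
    rw [hsub, hFTC] at hcong
    rw [hφt₁] at hcong
    linarith
  -- constraint for xs
  have hconxs : ∀ t ∈ Set.Icc t₀ t₁, (σ (xs t)).mulVec (deriv xs t) = deriv xs t := by
    intro t htI
    rw [hflow t htI, Matrix.mulVec_smul, Matrix.mulVec_mulVec, hidem (xs t)]
  -- constraint for x
  have hconx : ∀ t ∈ Set.Icc t₀ t₁, (σ (x t)).mulVec (deriv x t) = deriv x t := by
    intro t htI
    rw [hσ (x t)]
    exact sigma_kernel (Ω (x t)) (deriv x t) (hcon t htI)
  have hkxs := key xs hxs hconxs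
  have hkx := key x hx hconx
  -- xs integral is zero
  have hzero : (∫ t in t₀..t₁, (m / 2) *
      ((deriv xs t - m⁻¹ • (σ (xs t)).mulVec (grad (S t) (xs t))) ⬝ᵥ
       (deriv xs t - m⁻¹ • (σ (xs t)).mulVec (grad (S t) (xs t))))) = 0 := by
    have : (∫ t in t₀..t₁, (m / 2) *
        ((deriv xs t - m⁻¹ • (σ (xs t)).mulVec (grad (S t) (xs t))) ⬝ᵥ
         (deriv xs t - m⁻¹ • (σ (xs t)).mulVec (grad (S t) (xs t)))))
        = ∫ _ in t₀..t₁, (0:ℝ) := by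
      apply intervalIntegral.integral_congr
      rw [Set.uIcc_of_le ht]
      intro t htI
      have h0 : deriv xs t - m⁻¹ • (σ (xs t)).mulVec (grad (S t) (xs t)) = 0 := by
        rw [hflow t htI]; exact sub_self _
      simp only [h0, zero_dotProduct, mul_zero]
    rw [this, intervalIntegral.integral_zero]
  -- x integral is nonnegative
  have hnonneg : 0 ≤ ∫ t in t₀..t₁, (m / 2) *
      ((deriv x t - m⁻¹ • (σ (x t)).mulVec (grad (S t) (x t))) ⬝ᵥ
       (deriv x t - m⁻¹ • (σ (x t)).mulVec (grad (S t) (x t)))) := by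
    apply intervalIntegral.integral_nonneg ht
    intro u _
    apply mul_nonneg (by linarith)
    rw [dotProduct]
    exact Finset.sum_nonneg fun i _ => mul_self_nonneg _
  rw [hxs0] at hkxs
  rw [hx0] at hkx
  linarith
end
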